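/- Let G be a graph with maximum degree x, and let E be its edge set. For each edge e = {u,v} choose an endpoint Out(e) uniformly and independently at random, and let Out(E) = {Out(e) : e ∈ E}. Then for any subset S of V(G), Pr(S ⊆ Out(E)) ≤ (1 - 2^{-x})^{|S|/(x+1)}. -/

import Mathlib

open SimpleGraph
set_option linter.unusedSectionVars false

/-- The type of functions choosing one endpoint of every edge of `G`. -/
def EdgeChoice {V : Type} [Fintype V] [DecidableEq V] (G : SimpleGraph V)
    [DecidableRel G.Adj] : Type :=
  {f : G.edgeSet → V // ∀ e : G.edgeSet, f e ∈ (e : Sym2 V)}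

/-- The probability, under the uniform random choice of one endpoint of every edge,
that the chosen edge-choice function satisfies the predicate `P`. -/
noncomputable def choiceProb {V : Type} [Fintype V] [DecidableEq V] (G : SimpleGraph V)
    [DecidableRel G.Adj] (P : EdgeChoice G → Prop) : ℝ :=
  (Nat.card {f : EdgeChoice G // P f} : ℝ) / (Nat.card (EdgeChoice G) : ℝ)

variable {V : Type} [Fintype V] [DecidableEq V] (G : SimpleGraph V) [DecidableRel G.Adj]

instance : Finite (EdgeChoice G) := by unfold EdgeChoice; infer_instance

lemma card_add_compl {α : Type*} [Finite α] (p : α → Prop) :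
    Nat.card {x // p x} + Nat.card {x // ¬ p x} = Nat.card α := by
  classical
  have := Fintype.ofFinite α
  simp only [Nat.card_eq_fintype_card]
  rw [Fintype.card_subtype_compl]
  have := Fintype.card_subtype_le p
  omega

lemma card_fiber (e : G.edgeSet) : Nat.card {u : V // u ∈ (e : Sym2 V)} = 2 := by
  obtain ⟨e, he⟩ := e
  induction e with
  | _ a b =>
    have hab : a ≠ b := G.ne_of_adj (G.mem_edgeSet.1 he)
    have : {u : V // u ∈ s(a, b)} ≃ ({a, b} : Set V) :=
      Equiv.subtypeEquivRight (fun u => by simp [Sym2.mem_iff, Set.mem_insert_iff])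
    rw [Nat.card_congr this, Nat.card_coe_set_eq, Set.ncard_pair hab]

lemma card_incident (v : V) :
    Nat.card {e : G.edgeSet // v ∈ (e : Sym2 V)} = G.degree v := by
  have : {e : G.edgeSet // v ∈ (e : Sym2 V)} ≃ (G.incidenceSet v) :=
    { toFun := fun e => ⟨e.1.1, e.1.2, e.2⟩
      invFun := fun e => ⟨⟨e.1, e.2.1⟩, e.2.2⟩
      left_inv := fun e => rfl
      right_inv := fun e => rfl }
  rw [Nat.card_congr this, Nat.card_coe_set_eq, Set.ncard_eq_toFinset_card',
    ← SimpleGraph.incidenceFinset, G.card_incidenceFinset_eq_degree]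

def ECF : EdgeChoice G ≃ ∀ e : G.edgeSet, {u : V // u ∈ (e : Sym2 V)} :=
  { toFun := fun f e => ⟨f.1 e, f.2 e⟩
    invFun := fun g => ⟨fun e => (g e).1, fun e => (g e).2⟩
    left_inv := fun f => rfl
    right_inv := fun g => rfl }


def IncA (v : V) : Type :=
  ∀ e : {e : G.edgeSet // v ∈ ((e : G.edgeSet) : Sym2 V)}, {u : V // u ∈ ((e : G.edgeSet) : Sym2 V)}

def IncB (v : V) : Type :=
  ∀ e : {e : G.edgeSet // ¬ v ∈ ((e : G.edgeSet) : Sym2 V)}, {u : V // u ∈ ((e : G.edgeSet) : Sym2 V)}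

instance (v : V) : Finite (IncA G v) := by unfold IncA; infer_instance
instance (v : V) : Finite (IncB G v) := by unfold IncB; infer_instance


lemma cardA (v : V) : Nat.card (IncA G v) = 2 ^ G.degree v := by
  rw [IncA, Nat.card_pi, ← card_incident G v, Nat.card_eq_fintype_card]
  rw [Finset.prod_congr rfl (fun e _ => card_fiber G e.1)]
  simp

lemma card_miss (v : V) : Nat.card {a : IncA G v // ¬ ∃ e, (a e : V) = v} = 1 := by
  haveI hne : Nonempty {a : IncA G v // ¬ ∃ e, (a e : V) = v} := by
    refine ⟨⟨fun e => ⟨Sym2.Mem.other e.2, Sym2.other_mem e.2⟩, ?_⟩⟩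
    rintro ⟨e, he⟩
    exact Sym2.other_ne (G.not_isDiag_of_mem_edgeSet e.1.2) e.2 he
  haveI hss : Subsingleton {a : IncA G v // ¬ ∃ e, (a e : V) = v} := by
    constructor
    rintro ⟨a, ha⟩ ⟨a', ha'⟩
    push_neg at ha ha'
    refine Subtype.ext (funext fun e => Subtype.ext ?_)
    show (a e : V) = (a' e : V)
    have h1 : ((e : G.edgeSet) : Sym2 V) = s((a e : V), v) :=
      (Sym2.mem_and_mem_iff (ha e)).1 ⟨(a e).2, e.2⟩
    have h2 : ((e : G.edgeSet) : Sym2 V) = s((a' e : V), v) :=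
      (Sym2.mem_and_mem_iff (ha' e)).1 ⟨(a' e).2, e.2⟩
    exact Sym2.congr_left.1 (h1.symm.trans h2)
  exact Nat.card_unique

lemma card_hit (v : V) :
    Nat.card {a : IncA G v // ∃ e, (a e : V) = v} = 2 ^ G.degree v - 1 := by
  have h : Nat.card {a : IncA G v // ∃ e, (a e : V) = v} +
      Nat.card {a : IncA G v // ¬ ∃ e, (a e : V) = v} = Nat.card (IncA G v) :=
    card_add_compl _
  rw [card_miss, cardA] at h
  exact Nat.eq_sub_of_add_eq h

lemma step (v : V) (T : Finset V) (hT : ∀ u ∈ T, u ≠ v ∧ ¬ G.Adj u v) :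
    (Nat.card {f : EdgeChoice G // ∀ w ∈ insert v T, ∃ e : G.edgeSet, f.1 e = w} : ℝ) ≤
      (1 - ((2:ℝ) ^ G.maxDegree)⁻¹) *
        Nat.card {f : EdgeChoice G // ∀ w ∈ T, ∃ e : G.edgeSet, f.1 e = w} := by
  classical
  let E1 : EdgeChoice G ≃
      IncA G v × IncB G v :=
    (ECF G).trans (Equiv.piEquivPiSubtypeProd (fun e : G.edgeSet => v ∈ (e : Sym2 V))
      (fun e => {u : V // u ∈ (e : Sym2 V)}))
  have hwitv : ∀ (f : EdgeChoice G), (∃ e : G.edgeSet, f.1 e = v) ↔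
      (∃ e, ((E1 f).1 e : V) = v) := by
    intro f
    constructor
    · rintro ⟨e, he⟩
      exact ⟨⟨e, he ▸ f.2 e⟩, he⟩
    · rintro ⟨e, he⟩
      exact ⟨e.1, he⟩
  have hwitu : ∀ (f : EdgeChoice G) (u : V), u ∈ T → ((∃ e : G.edgeSet, f.1 e = u) ↔
      (∃ e, ((E1 f).2 e : V) = u)) := by
    intro f u hu
    constructor
    · rintro ⟨e, he⟩
      refine ⟨⟨e, fun hpe => ?_⟩, he⟩
      have hue : u ∈ (e : Sym2 V) := he ▸ f.2 e
      have heq : (e : Sym2 V) = s(u, v) := (Sym2.mem_and_mem_iff (hT u hu).1).1 ⟨hue, hpe⟩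
      exact (hT u hu).2 (G.mem_edgeSet.1 (heq ▸ e.2))
    · rintro ⟨e, he⟩
      exact ⟨e.1, he⟩
  have hcard1 : Nat.card {f : EdgeChoice G // ∀ w ∈ insert v T, ∃ e : G.edgeSet, f.1 e = w}
      = Nat.card {a : IncA G v // ∃ e, (a e : V) = v} *
        Nat.card {b : IncB G v // ∀ u ∈ T, ∃ e, (b e : V) = u} := by
    rw [← Nat.card_prod]
    refine Nat.card_congr ((E1.subtypeEquiv ?_).trans Equiv.subtypeProdEquivProd)
    intro f
    simp only [Finset.mem_insert, forall_eq_or_imp]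
    constructor
    · rintro ⟨h1, h2⟩
      exact ⟨(hwitv f).1 h1, fun u hu => (hwitu f u hu).1 (h2 u hu)⟩
    · rintro ⟨h1, h2⟩
      exact ⟨(hwitv f).2 h1, fun u hu => (hwitu f u hu).2 (h2 u hu)⟩
  have hcard2 : Nat.card {f : EdgeChoice G // ∀ w ∈ T, ∃ e : G.edgeSet, f.1 e = w}
      = Nat.card (IncA G v) *
        Nat.card {b : IncB G v // ∀ u ∈ T, ∃ e, (b e : V) = u} := by
    rw [← Nat.card_prod]
    refine Nat.card_congr (((E1.subtypeEquiv ?_).trans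
      (@Equiv.subtypeProdEquivProd _ _ (fun _ => True)
        (fun b : IncB G v => ∀ u ∈ T, ∃ e, (b e : V) = u))).trans
      (Equiv.prodCongr (Equiv.subtypeUnivEquiv (fun _ => trivial)) (Equiv.refl _)))
    intro f
    constructor
    · intro h
      exact ⟨trivial, fun u hu => (hwitu f u hu).1 (h u hu)⟩
    · rintro ⟨-, h⟩
      exact fun u hu => (hwitu f u hu).2 (h u hu)
  rw [hcard1, hcard2, card_hit, cardA]
  have hd : G.degree v ≤ G.maxDegree := G.degree_le_maxDegree v
  rw [Nat.cast_mul, Nat.cast_mul, Nat.cast_sub Nat.one_le_two_pow]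
  push_cast
  have hle : (2:ℝ) ^ G.degree v ≤ 2 ^ G.maxDegree := pow_le_pow_right₀ (by norm_num) hd
  have hx : (0:ℝ) < 2 ^ G.maxDegree := by positivity
  have key : ((2:ℝ) ^ G.degree v - 1) ≤ (1 - ((2:ℝ) ^ G.maxDegree)⁻¹) * 2 ^ G.degree v := by
    have h1 : (2:ℝ) ^ G.degree v * ((2:ℝ) ^ G.maxDegree)⁻¹ ≤ 1 := by
      rw [← div_eq_mul_inv, div_le_one hx]; exact hle
    nlinarith
  have hc : (0:ℝ) ≤ (Nat.card {b : IncB G v // ∀ u ∈ T, ∃ e, ((b e : V)) = u} : ℝ) := Nat.cast_nonneg _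
  push_cast
  nlinarith [mul_le_mul_of_nonneg_right key hc]

lemma exists_indep (S : Finset V) : ∃ T : Finset V, T ⊆ S ∧
    ((T : Set V).Pairwise fun u w => ¬ G.Adj u w) ∧
    S.card ≤ T.card * (G.maxDegree + 1) := by
  classical
  induction S using Finset.strongInduction with
  | _ S ih =>
    rcases S.eq_empty_or_nonempty with rfl | ⟨v, hv⟩
    · exact ⟨∅, Finset.Subset.refl _, by simp, by simp⟩
    · set S' := S \ insert v (G.neighborFinset v) with hS'
      have hssub : S' ⊂ S := by
        refine Finset.ssubset_iff_of_subset (Finset.sdiff_subset) |>.2 ⟨v, hv, ?_⟩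
        simp [hS']
      obtain ⟨T', hT'sub, hT'pw, hT'card⟩ := ih S' hssub
      have hvT' : v ∉ T' := fun h => by
        have := hT'sub h
        simp [hS'] at this
      have hnadj : ∀ u ∈ T', u ≠ v ∧ ¬ G.Adj v u := by
        intro u hu
        have := hT'sub hu
        simp only [hS', Finset.mem_sdiff, Finset.mem_insert, mem_neighborFinset] at this
        exact ⟨fun h => this.2 (Or.inl h), fun h => this.2 (Or.inr h)⟩
      refine ⟨insert v T', ?_, ?_, ?_⟩
      · exact Finset.insert_subset hv (hT'sub.trans Finset.sdiff_subset)
      · rw [Finset.coe_insert]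
        have hsym : Symmetric (fun u w : V => ¬ G.Adj u w) := fun {u w} h hadj => h hadj.symm
        refine (haveI : Std.Symm (fun u w : V => ¬ G.Adj u w) := ⟨fun _ _ h => hsym h⟩; Set.pairwise_insert_of_symm).2 ⟨hT'pw, fun u hu hne => ?_⟩
        exact fun h => (hnadj u hu).2 h
      · rw [Finset.card_insert_of_notMem hvT']
        have h1 : S.card ≤ S'.card + (G.maxDegree + 1) := by
          have h2 : S ⊆ S' ∪ insert v (G.neighborFinset v) := by
            intro u hu
            by_cases h : u ∈ insert v (G.neighborFinset v)
            · exact Finset.mem_union_right _ h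
            · exact Finset.mem_union_left _ (by simp [hS', hu, h])
          calc S.card ≤ (S' ∪ insert v (G.neighborFinset v)).card := Finset.card_le_card h2
            _ ≤ S'.card + (insert v (G.neighborFinset v)).card := Finset.card_union_le _ _
            _ ≤ S'.card + (G.neighborFinset v).card + 1 := by
                have := Finset.card_insert_le v (G.neighborFinset v); omega
            _ ≤ S'.card + (G.maxDegree + 1) := by
                have := G.degree_le_maxDegree v
                rw [← card_neighborFinset_eq_degree] at this
                omega
        calc S.card ≤ S'.card + (G.maxDegree + 1) := h1
          _ ≤ T'.card * (G.maxDegree + 1) + (G.maxDegree + 1) := by omega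
          _ = (T'.card + 1) * (G.maxDegree + 1) := by ring

lemma count_le (T : Finset V) :
    ((T : Set V).Pairwise fun u w => ¬ G.Adj u w) →
    (Nat.card {f : EdgeChoice G // ∀ w ∈ T, ∃ e : G.edgeSet, f.1 e = w} : ℝ) ≤
      (1 - ((2:ℝ) ^ G.maxDegree)⁻¹) ^ T.card * Nat.card (EdgeChoice G) := by
  classical
  have hb0 : (0:ℝ) ≤ 1 - ((2:ℝ) ^ G.maxDegree)⁻¹ := by
    have h1 : (1:ℝ) ≤ 2 ^ G.maxDegree := one_le_pow₀ (by norm_num)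
    have := inv_le_one_of_one_le₀ h1
    linarith
  induction T using Finset.induction with
  | empty =>
    intro _
    rw [Nat.card_congr (Equiv.subtypeUnivEquiv
      (fun f => fun w hw => absurd hw (Finset.notMem_empty w)))]
    simp
  | @insert v T hvT ih =>
    intro hpw
    have hpw' : (T : Set V).Pairwise fun u w => ¬ G.Adj u w :=
      hpw.mono (by simp [Set.subset_insert])
    have hstep := step G v T (fun u hu => ⟨fun h => hvT (h ▸ hu),
      hpw (by simp [hu]) (by simp) (fun h => hvT (h ▸ hu))⟩)
    calc (Nat.card {f : EdgeChoice G // ∀ w ∈ insert v T, ∃ e : G.edgeSet, f.1 e = w} : ℝ)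
        ≤ (1 - ((2:ℝ) ^ G.maxDegree)⁻¹) *
            Nat.card {f : EdgeChoice G // ∀ w ∈ T, ∃ e : G.edgeSet, f.1 e = w} := hstep
      _ ≤ (1 - ((2:ℝ) ^ G.maxDegree)⁻¹) *
            ((1 - ((2:ℝ) ^ G.maxDegree)⁻¹) ^ T.card * Nat.card (EdgeChoice G)) :=
          mul_le_mul_of_nonneg_left (ih hpw') hb0
      _ = (1 - ((2:ℝ) ^ G.maxDegree)⁻¹) ^ (insert v T).card * Nat.card (EdgeChoice G) := by
          rw [Finset.card_insert_of_notMem hvT, pow_succ]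
          ring

lemma edgeChoice_nonempty : Nonempty (EdgeChoice G) := by
  have ex : ∀ e : G.edgeSet, ∃ u : V, u ∈ (e : Sym2 V) := by
    rintro ⟨e, he⟩
    induction e with
    | _ a b => exact ⟨a, by simp⟩
  exact ⟨⟨fun e => (ex e).choose, fun e => (ex e).choose_spec⟩⟩


/-- For any subset `S` of the vertices of a graph `G` of maximum degree `x`,
the probability that `S ⊆ Out(E)` is at most `(1 - 2^{-x})^{|S|/(x+1)}`. -/
theorem prob_subset_out_le {V : Type} [Fintype V] [DecidableEq V] (G : SimpleGraph V)
    [DecidableRel G.Adj] (S : Finset V) :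
    choiceProb G (fun f => ∀ v ∈ S, ∃ e : G.edgeSet, f.1 e = v) ≤
      (1 - (2 : ℝ) ^ (-(G.maxDegree : ℝ))) ^ ((S.card : ℝ) / ((G.maxDegree : ℝ) + 1)) := by
  classical
  have hD : (0:ℝ) < (Nat.card (EdgeChoice G) : ℝ) := by
    have := edgeChoice_nonempty G
    exact_mod_cast Nat.card_pos
  have hbase : (1 : ℝ) - (2 : ℝ) ^ (-(G.maxDegree : ℝ)) = 1 - ((2:ℝ) ^ G.maxDegree)⁻¹ := by
    rw [Real.rpow_neg (by norm_num), Real.rpow_natCast]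
  have hNum_le_D : (Nat.card {f : EdgeChoice G // ∀ v ∈ S, ∃ e : G.edgeSet, f.1 e = v} : ℝ)
      ≤ Nat.card (EdgeChoice G) := by
    exact_mod_cast Nat.card_le_card_of_injective _ Subtype.val_injective
  rcases Nat.eq_zero_or_pos G.maxDegree with hx0 | hxpos
  · -- max degree zero: no edges
    have hne : ∀ e : Sym2 V, e ∉ G.edgeSet := by
      rintro e he
      induction e with
      | _ a b =>
        have hadj := G.mem_edgeSet.1 he
        have h1 : 0 < G.degree a := by
          rw [G.degree_pos_iff_exists_adj]; exact ⟨b, hadj⟩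
        have := G.degree_le_maxDegree a
        omega
    rcases S.eq_empty_or_nonempty with rfl | ⟨v, hv⟩
    · rw [choiceProb]
      rw [Finset.card_empty]
      simp only [Nat.cast_zero, zero_div, Real.rpow_zero]
      rw [div_le_one hD]
      exact hNum_le_D
    · have hempty : IsEmpty {f : EdgeChoice G // ∀ v ∈ S, ∃ e : G.edgeSet, f.1 e = v} := by
        constructor
        rintro ⟨f, hf⟩
        obtain ⟨e, -⟩ := hf v hv
        exact hne e.1 e.2
      rw [choiceProb, Nat.card_of_isEmpty, Nat.cast_zero, zero_div]
      apply Real.rpow_nonneg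
      rw [hbase, hx0]
      norm_num
  · -- main case
    obtain ⟨T, hTS, hTpw, hTcard⟩ := exists_indep G S
    have hb1 : ((2:ℝ) ^ G.maxDegree)⁻¹ < 1 := by
      rw [inv_lt_one_iff₀]
      right
      exact one_lt_pow₀ (by norm_num) (by omega)
    have hbpos : (0:ℝ) < 1 - ((2:ℝ) ^ G.maxDegree)⁻¹ := by linarith
    have hble : (1:ℝ) - ((2:ℝ) ^ G.maxDegree)⁻¹ ≤ 1 := by
      have : (0:ℝ) ≤ ((2:ℝ) ^ G.maxDegree)⁻¹ := by positivity
      linarith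
    have hmono : (Nat.card {f : EdgeChoice G // ∀ v ∈ S, ∃ e : G.edgeSet, f.1 e = v} : ℝ)
        ≤ Nat.card {f : EdgeChoice G // ∀ w ∈ T, ∃ e : G.edgeSet, f.1 e = w} := by
      have : Function.Injective (fun f : {f : EdgeChoice G // ∀ v ∈ S, ∃ e : G.edgeSet, f.1 e = v} =>
          (⟨f.1, fun w hw => f.2 w (hTS hw)⟩ : {f : EdgeChoice G // ∀ w ∈ T, ∃ e : G.edgeSet, f.1 e = w})) := by
        rintro ⟨f, hf⟩ ⟨g, hg⟩ h
        simpa [Subtype.ext_iff] using h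
      exact_mod_cast Nat.card_le_card_of_injective _ this
    have hcount := count_le G T hTpw
    have hprob : choiceProb G (fun f => ∀ v ∈ S, ∃ e : G.edgeSet, f.1 e = v)
        ≤ (1 - ((2:ℝ) ^ G.maxDegree)⁻¹) ^ T.card := by
      rw [choiceProb, div_le_iff₀ hD]
      exact le_trans hmono hcount
    refine le_trans hprob ?_
    rw [hbase, ← Real.rpow_natCast (1 - ((2:ℝ) ^ G.maxDegree)⁻¹) T.card]
    apply Real.rpow_le_rpow_of_exponent_ge hbpos hble
    rw [div_le_iff₀ (by positivity)]
    calc (S.card : ℝ) ≤ (T.card * (G.maxDegree + 1) : ℕ) := by exact_mod_cast hTcard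
      _ = (T.card : ℝ) * ((G.maxDegree : ℝ) + 1) := by push_cast; ring
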